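/- Let q > t ≥ 2 be integers and 0 < ε < min{q/(2t), 1/2}. Let δ ∈ {0,1} with δ ≡ t (mod 2) and set t₁ = t−1+δ (the largest odd integer ≤ t). Then (q,t,ε) is a good triple if and only if 0 < ε < min{ q/(2t₁) − 1/2, q/(2t), 1/2 }. -/
import Mathlib


/-- `(q,t,ε)` is a good triple: for every `2 ≤ t' ≤ t` there is an integer
`s ∈ [1,t']` with `t'/2 - (1-2ε)t'/(2q) < s < t'/2 + 1 - (1+2ε)t'/(2q)`. -/
def GoodTriple (q t : ℕ) (ε : ℝ) : Prop :=
  ∀ t' : ℕ, 2 ≤ t' → t' ≤ t →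
    ∃ s : ℕ, 1 ≤ s ∧ s ≤ t' ∧
      (t' : ℝ) / 2 - (1 - 2 * ε) * (t' : ℝ) / (2 * (q : ℝ)) < (s : ℝ) ∧
      (s : ℝ) < (t' : ℝ) / 2 + 1 - (1 + 2 * ε) * (t' : ℝ) / (2 * (q : ℝ))

set_option maxHeartbeats 1000000 in
theorem stmt7 (q t : ℕ) (ht : 2 ≤ t) (htq : t < q)
    (ε : ℝ) (hε0 : 0 < ε) (hε : ε < min ((q : ℝ) / (2 * (t : ℝ))) (1 / 2))
    (δ : ℕ) (hδ01 : δ = 0 ∨ δ = 1) (hδ : δ % 2 = t % 2) :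
    GoodTriple q t ε ↔
      (0 < ε ∧ ε < min ((q : ℝ) / (2 * ((t : ℝ) - 1 + (δ : ℝ))) - 1 / 2)
        (min ((q : ℝ) / (2 * (t : ℝ))) (1 / 2))) := by
  have hεhalf : ε < 1 / 2 := lt_of_lt_of_le hε (min_le_right _ _)
  set T : ℕ := t - 1 + δ with hT
  have hT1 : 1 ≤ T := by omega
  have hTodd : T % 2 = 1 := by omega
  have hTt : T ≤ t := by omega
  have hTcast : ((T : ℕ) : ℝ) = (t : ℝ) - 1 + (δ : ℝ) := by
    have h1 : (T : ℕ) = t - 1 + δ := rfl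
    rw [h1]
    push_cast [Nat.cast_sub (show 1 ≤ t by omega)]
    ring
  have hqR : (3 : ℝ) ≤ (q : ℝ) := by exact_mod_cast (by omega : 3 ≤ q)
  have htqR : (t : ℝ) < (q : ℝ) := by exact_mod_cast htq
  have hTpos : (0 : ℝ) < (T : ℝ) := by exact_mod_cast hT1
  have hTtR : (T : ℝ) ≤ (t : ℝ) := by exact_mod_cast hTt
  have h2q : (0 : ℝ) < 2 * (q : ℝ) := by linarith
  constructor
  · intro h
    refine ⟨hε0, lt_min ?_ hε⟩
    rw [← hTcast]
    by_cases hT3 : T = 1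
    · rw [hT3]; push_cast
      nlinarith
    · have hT3' : 3 ≤ T := by omega
      obtain ⟨s, hs1, hs2, hs3, hs4⟩ := h T (by omega) hTt
      set k := T / 2 with hk
      have hkT : T = 2 * k + 1 := by omega
      have hkR : ((T : ℕ) : ℝ) = 2 * (k : ℝ) + 1 := by exact_mod_cast congrArg (Nat.cast (R := ℝ)) hkT
      have ha : (1 - 2 * ε) * (T : ℝ) / (2 * (q : ℝ)) < 1 / 2 := by
        rw [div_lt_iff₀ h2q]
        nlinarith
      have hks : (k : ℝ) < (s : ℝ) := by
        have : (T : ℝ) / 2 - 1 / 2 < (s : ℝ) := by linarith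
        rw [hkR] at this; linarith
      have hksN : k < s := by exact_mod_cast hks
      have hks1 : (k : ℝ) + 1 ≤ (s : ℝ) := by exact_mod_cast (by omega : k + 1 ≤ s)
      have hhalf : (T : ℝ) / 2 - (k : ℝ) = 1 / 2 := by rw [hkR]; ring
      have hb : (1 + 2 * ε) * (T : ℝ) / (2 * (q : ℝ)) < 1 / 2 := by linarith
      rw [div_lt_iff₀ h2q] at hb
      rw [lt_sub_iff_add_lt, lt_div_iff₀ (by positivity)]
      nlinarith
  · rintro ⟨-, hmin⟩
    have hodd : ε < (q : ℝ) / (2 * (T : ℝ)) - 1 / 2 := by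
      rw [hTcast]; exact lt_of_lt_of_le hmin (min_le_left _ _)
    have hkey : (1 + 2 * ε) * (T : ℝ) < (q : ℝ) := by
      rw [lt_sub_iff_add_lt, lt_div_iff₀ (by positivity)] at hodd
      nlinarith
    intro t' h2 hle
    have ht'R : (2 : ℝ) ≤ (t' : ℝ) := by exact_mod_cast h2
    have ht'q : (t' : ℝ) < (q : ℝ) := by
      have : t' < q := by omega
      exact_mod_cast this
    by_cases hpar : t' % 2 = 0
    · set k := t' / 2 with hk
      have hkt : t' = 2 * k := by omega
      have hkR : ((t' : ℕ) : ℝ) = 2 * (k : ℝ) := by exact_mod_cast congrArg (Nat.cast (R := ℝ)) hkt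
      have heq : (k : ℝ) = (t' : ℝ) / 2 := by rw [hkR]; ring
      have ha0 : (0 : ℝ) < (1 - 2 * ε) * (t' : ℝ) / (2 * (q : ℝ)) :=
        div_pos (mul_pos (by linarith) (by linarith)) h2q
      refine ⟨k, by omega, by omega, ?_, ?_⟩
      · linarith
      · have h1 : (1 + 2 * ε) * (t' : ℝ) < 2 * (t' : ℝ) := by
          have := mul_lt_mul_of_pos_right (show 1 + 2 * ε < 2 by linarith)
            (show (0 : ℝ) < (t' : ℝ) by linarith)
          linarith
        have : (1 + 2 * ε) * (t' : ℝ) / (2 * (q : ℝ)) < 1 := by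
          rw [div_lt_iff₀ h2q]; linarith
        linarith
    · set k := t' / 2 with hk
      have hkt : t' = 2 * k + 1 := by omega
      have ht'T : t' ≤ T := by omega
      have ht'TR : (t' : ℝ) ≤ (T : ℝ) := by exact_mod_cast ht'T
      have hkR : ((t' : ℕ) : ℝ) = 2 * (k : ℝ) + 1 := by exact_mod_cast congrArg (Nat.cast (R := ℝ)) hkt
      have heq : (k : ℝ) + 1 = (t' : ℝ) / 2 + 1 / 2 := by rw [hkR]; ring
      have ha0 : (0 : ℝ) < (1 - 2 * ε) * (t' : ℝ) / (2 * (q : ℝ)) :=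
        div_pos (mul_pos (by linarith) (by linarith)) h2q
      have hmono : (1 + 2 * ε) * (t' : ℝ) ≤ (1 + 2 * ε) * (T : ℝ) :=
        mul_le_mul_of_nonneg_left ht'TR (by linarith)
      have hb : (1 + 2 * ε) * (t' : ℝ) / (2 * (q : ℝ)) < 1 / 2 := by
        rw [div_lt_iff₀ h2q]; linarith
      refine ⟨k + 1, by omega, by omega, ?_, ?_⟩
      · push_cast; linarith
      · push_cast; linarith
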